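/- Let n ≥ 2 and m ≥ 1, and let S_{n,m} be the complete split graph on n + m vertices, viewed as the simplicial complex Δ(S_{n,m}). Then the NF-number of S_{n,m} satisfies NF(S_{n,m}) = n + m + 2. -/

import Mathlib

/-- `C` is a vertex cover of the complex with facet family `F`:
it meets every facet. -/
def IsVC {V : Type*} (F : Set (Set V)) (C : Set V) : Prop :=
  ∀ f ∈ F, (C ∩ f).Nonempty

/-- `C` is a minimal vertex cover. -/
def IsMinVC {V : Type*} (F : Set (Set V)) (C : Set V) : Prop :=
  IsVC F C ∧ ∀ D : Set V, D ⊂ C → ¬ IsVC F D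

/-- The NF-operator on facet families: the facets of `nf F` are the
complements of the minimal vertex covers of `F`. -/
def nf {V : Type*} (F : Set (Set V)) : Set (Set V) :=
  {S | ∃ C : Set V, IsMinVC F C ∧ S = Cᶜ}

/-- Two complexes on the same vertex set are isomorphic if some permutation of
the vertices carries the facet family of one onto that of the other. -/
def IsIsoC {V : Type*} (F G : Set (Set V)) : Prop :=
  ∃ π : V ≃ V, ∀ S : Set V, S ∈ F ↔ π '' S ∈ G

/-- The complete split graph `S_{n,m}` as a family of edges (facets) on the
vertex set `Fin n ⊕ Fin m`: all pairs inside the clique `A = range Sum.inl`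
together with all cross pairs to the independent set `B = range Sum.inr`. -/
def splitGraph (n m : ℕ) : Set (Set (Fin n ⊕ Fin m)) :=
  {e | (∃ i j : Fin n, i ≠ j ∧ e = {Sum.inl i, Sum.inl j}) ∨
       (∃ (i : Fin n) (j : Fin m), e = {Sum.inl i, Sum.inr j})}

open Set

namespace NFAux

variable {n m : ℕ}

noncomputable def cA (S : Set (Fin n ⊕ Fin m)) : ℕ := (S ∩ range Sum.inl).ncard
noncomputable def cB (S : Set (Fin n ⊕ Fin m)) : ℕ := (S ∩ range Sum.inr).ncard

lemma partitionAB (S : Set (Fin n ⊕ Fin m)) :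
    (S ∩ range Sum.inl) ∪ (S ∩ range Sum.inr) = S := by
  ext v
  constructor
  · rintro (⟨h, _⟩ | ⟨h, _⟩) <;> exact h
  · intro hv
    cases v with
    | inl i => exact Or.inl ⟨hv, ⟨i, rfl⟩⟩
    | inr j => exact Or.inr ⟨hv, ⟨j, rfl⟩⟩

lemma disjAB (S : Set (Fin n ⊕ Fin m)) :
    Disjoint (S ∩ range Sum.inl) (S ∩ range Sum.inr) := by
  rw [Set.disjoint_left]
  rintro v ⟨_, i, rfl⟩ ⟨_, j, hj⟩
  simp at hj

lemma cA_add_cB (S : Set (Fin n ⊕ Fin m)) : cA S + cB S = S.ncard := by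
  rw [cA, cB, ← Set.ncard_union_eq (disjAB S) (toFinite _) (toFinite _), partitionAB]

lemma ncard_range_inl : (range (Sum.inl : Fin n → Fin n ⊕ Fin m)).ncard = n := by
  rw [← image_univ, ncard_image_of_injective _ Sum.inl_injective, ncard_univ,
    Nat.card_eq_fintype_card, Fintype.card_fin]

lemma ncard_range_inr : (range (Sum.inr : Fin m → Fin n ⊕ Fin m)).ncard = m := by
  rw [← image_univ, ncard_image_of_injective _ Sum.inr_injective, ncard_univ,
    Nat.card_eq_fintype_card, Fintype.card_fin]

lemma cA_le (S : Set (Fin n ⊕ Fin m)) : cA S ≤ n :=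
  le_trans (ncard_le_ncard inter_subset_right (toFinite _)) (le_of_eq ncard_range_inl)

lemma cB_le (S : Set (Fin n ⊕ Fin m)) : cB S ≤ m :=
  le_trans (ncard_le_ncard inter_subset_right (toFinite _)) (le_of_eq ncard_range_inr)

lemma cA_mono {S S' : Set (Fin n ⊕ Fin m)} (h : S ⊆ S') : cA S ≤ cA S' :=
  ncard_le_ncard (inter_subset_inter_left _ h) (toFinite _)

lemma cB_mono {S S' : Set (Fin n ⊕ Fin m)} (h : S ⊆ S') : cB S ≤ cB S' :=
  ncard_le_ncard (inter_subset_inter_left _ h) (toFinite _)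

lemma exists_subset_counts {D : Set (Fin n ⊕ Fin m)} {a b : ℕ}
    (ha : a ≤ cA D) (hb : b ≤ cB D) : ∃ f ⊆ D, cA f = a ∧ cB f = b := by
  obtain ⟨U, hU, hUc⟩ := Set.exists_subset_card_eq (s := D ∩ range Sum.inl) ha
  obtain ⟨W, hW, hWc⟩ := Set.exists_subset_card_eq (s := D ∩ range Sum.inr) hb
  have hUA : (U ∪ W) ∩ range Sum.inl = U := by
    apply subset_antisymm
    · rintro v ⟨hv | hv, hr⟩
      · exact hv
      · obtain ⟨i, rfl⟩ := hr
        obtain ⟨_, j, hj⟩ := hW hv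
        simp at hj
    · exact fun v hv => ⟨Or.inl hv, (hU hv).2⟩
  have hWB : (U ∪ W) ∩ range Sum.inr = W := by
    apply subset_antisymm
    · rintro v ⟨hv | hv, hr⟩
      · obtain ⟨i, rfl⟩ := hr
        obtain ⟨_, j, hj⟩ := hU hv
        simp at hj
      · exact hv
    · exact fun v hv => ⟨Or.inr hv, (hW hv).2⟩
  refine ⟨U ∪ W, union_subset (hU.trans inter_subset_left) (hW.trans inter_subset_left),
    ?_, ?_⟩
  · rw [cA, hUA, hUc]
  · rw [cB, hWB, hWc]

lemma exists_counts {a b : ℕ} (ha : a ≤ n) (hb : b ≤ m) :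
    ∃ S : Set (Fin n ⊕ Fin m), cA S = a ∧ cB S = b := by
  have h1 : cA (univ : Set (Fin n ⊕ Fin m)) = n := by rw [cA, univ_inter, ncard_range_inl]
  have h2 : cB (univ : Set (Fin n ⊕ Fin m)) = m := by rw [cB, univ_inter, ncard_range_inr]
  obtain ⟨f, _, hf⟩ := exists_subset_counts (D := univ) (h1 ▸ ha) (h2 ▸ hb)
  exact ⟨f, hf⟩

lemma cA_insert {v : Fin n ⊕ Fin m} {S : Set (Fin n ⊕ Fin m)}
    (hv : v ∈ range Sum.inl) (hnv : v ∉ S) :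
    cA (insert v S) = cA S + 1 ∧ cB (insert v S) = cB S := by
  constructor
  · rw [cA, Set.insert_inter_of_mem hv, cA,
      Set.ncard_insert_of_notMem (fun h => hnv h.1) (toFinite _)]
  · rw [cB, Set.insert_inter_of_notMem, cB]
    rintro ⟨j, hj⟩
    obtain ⟨i, rfl⟩ := hv
    simp at hj

lemma cB_insert {v : Fin n ⊕ Fin m} {S : Set (Fin n ⊕ Fin m)}
    (hv : v ∈ range Sum.inr) (hnv : v ∉ S) :
    cA (insert v S) = cA S ∧ cB (insert v S) = cB S + 1 := by
  constructor
  · rw [cA, Set.insert_inter_of_notMem, cA]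
    rintro ⟨j, hj⟩
    obtain ⟨i, rfl⟩ := hv
    simp at hj
  · rw [cB, Set.insert_inter_of_mem hv, cB,
      Set.ncard_insert_of_notMem (fun h => hnv h.1) (toFinite _)]

/-- Layered family on the vertex set. -/
def LL (n m : ℕ) (T : Set (ℕ × ℕ)) : Set (Set (Fin n ⊕ Fin m)) :=
  {S | (cA S, cB S) ∈ T}

/-- The complement-of-cover predicate on counts. -/
def PP (T : Set (ℕ × ℕ)) (α β : ℕ) : Prop := ∀ p ∈ T, α < p.1 ∨ β < p.2

lemma PP_mono {T : Set (ℕ × ℕ)} {α β α' β' : ℕ} (h : PP T α' β')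
    (h1 : α ≤ α') (h2 : β ≤ β') : PP T α β := by
  intro p hp
  rcases h p hp with h' | h'
  · exact Or.inl (by omega)
  · exact Or.inr (by omega)

/-- The grid version of the NF operator. -/
def phiG (n m : ℕ) (T : Set (ℕ × ℕ)) : Set (ℕ × ℕ) :=
  {p | p.1 ≤ n ∧ p.2 ≤ m ∧ PP T p.1 p.2 ∧ (p.1 = n ∨ ¬ PP T (p.1 + 1) p.2) ∧
    (p.2 = m ∨ ¬ PP T p.1 (p.2 + 1))}

lemma VC_iff (T : Set (ℕ × ℕ)) (C : Set (Fin n ⊕ Fin m)) :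
    IsVC (LL n m T) C ↔ PP T (cA Cᶜ) (cB Cᶜ) := by
  constructor
  · intro h p hp
    by_contra hc
    push_neg at hc
    obtain ⟨f, hfD, hfa, hfb⟩ := exists_subset_counts hc.1 hc.2
    have hfT : f ∈ LL n m T := by
      show (cA f, cB f) ∈ T
      rw [hfa, hfb]
      exact hp
    obtain ⟨v, hvC, hvf⟩ := h f hfT
    exact (hfD hvf) hvC
  · intro hP f hf
    by_contra hne
    have hsub : f ⊆ Cᶜ := fun v hv => fun hvC => hne ⟨v, hvC, hv⟩
    rcases hP (cA f, cB f) hf with h' | h'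
    · exact absurd (cA_mono hsub) (by omega)
    · exact absurd (cB_mono hsub) (by omega)

lemma compl_ssubset {D C : Set (Fin n ⊕ Fin m)} (h : D ⊂ C) : Cᶜ ⊂ Dᶜ := by
  constructor
  · exact compl_subset_compl.2 h.1
  · intro hcon
    exact h.2 (by simpa using compl_subset_compl.2 hcon)

lemma MinVC_iff (T : Set (ℕ × ℕ)) (C : Set (Fin n ⊕ Fin m)) :
    IsMinVC (LL n m T) C ↔ (cA Cᶜ, cB Cᶜ) ∈ phiG n m T := by
  constructor
  · rintro ⟨hvc, hmin⟩
    refine ⟨cA_le _, cB_le _, (VC_iff T C).1 hvc, ?_, ?_⟩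
    · by_cases hA : cA Cᶜ = n
      · exact Or.inl hA
      · refine Or.inr (fun hP1 => ?_)
        have hAlt : cA Cᶜ < n := lt_of_le_of_ne (cA_le _) hA
        have hex : ∃ v ∈ range (Sum.inl : Fin n → Fin n ⊕ Fin m), v ∉ Cᶜ := by
          by_contra hcon
          push_neg at hcon
          have : Cᶜ ∩ range Sum.inl = range Sum.inl := inter_eq_right.2 hcon
          have : cA Cᶜ = n := by rw [cA, this, ncard_range_inl]
          omega
        obtain ⟨v, hvA, hvC⟩ := hex
        have hD : (insert v Cᶜ)ᶜ ⊂ C := by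
          have := compl_ssubset (show Cᶜ ⊂ insert v Cᶜ from Set.ssubset_insert hvC)
          simpa using this
        apply hmin _ hD
        rw [VC_iff, compl_compl, (cA_insert hvA hvC).1, (cA_insert hvA hvC).2]
        exact hP1
    · by_cases hB : cB Cᶜ = m
      · exact Or.inl hB
      · refine Or.inr (fun hP1 => ?_)
        have hBlt : cB Cᶜ < m := lt_of_le_of_ne (cB_le _) hB
        have hex : ∃ v ∈ range (Sum.inr : Fin m → Fin n ⊕ Fin m), v ∉ Cᶜ := by
          by_contra hcon
          push_neg at hcon
          have : Cᶜ ∩ range Sum.inr = range Sum.inr := inter_eq_right.2 hcon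
          have : cB Cᶜ = m := by rw [cB, this, ncard_range_inr]
          omega
        obtain ⟨v, hvB, hvC⟩ := hex
        have hD : (insert v Cᶜ)ᶜ ⊂ C := by
          have := compl_ssubset (show Cᶜ ⊂ insert v Cᶜ from Set.ssubset_insert hvC)
          simpa using this
        apply hmin _ hD
        rw [VC_iff, compl_compl, (cB_insert hvB hvC).1, (cB_insert hvB hvC).2]
        exact hP1
  · rintro ⟨h1, h2, hP, hl1, hl2⟩
    refine ⟨(VC_iff T C).2 hP, ?_⟩
    intro D hD hvc
    have hss : Cᶜ ⊂ Dᶜ := compl_ssubset hD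
    have hPD := (VC_iff T D).1 hvc
    have hcard : cA Cᶜ + cB Cᶜ < cA Dᶜ + cB Dᶜ := by
      rw [cA_add_cB, cA_add_cB]
      exact Set.ncard_lt_ncard hss (toFinite _)
    have hA := cA_mono hss.1
    have hB := cB_mono hss.1
    have hAn := cA_le (Dᶜ : Set (Fin n ⊕ Fin m))
    have hBm := cB_le (Dᶜ : Set (Fin n ⊕ Fin m))
    rcases Nat.lt_or_ge (cA Cᶜ) (cA Dᶜ) with h' | h'
    · rcases hl1 with h'' | h''
      · omega
      · exact h'' (PP_mono hPD (by omega) (by omega))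
    · rcases hl2 with h'' | h''
      · omega
      · exact h'' (PP_mono hPD (by omega) (by omega))

lemma nf_LL (T : Set (ℕ × ℕ)) : nf (LL n m T) = LL n m (phiG n m T) := by
  ext S
  constructor
  · rintro ⟨C, hC, rfl⟩
    exact (MinVC_iff T C).1 hC
  · intro hS
    refine ⟨Sᶜ, (MinVC_iff T Sᶜ).2 ?_, (compl_compl S).symm⟩
    rwa [compl_compl]


/-- The staircase family: closed form of the NF-iterates of the split graph. -/
def Gf (n m s : ℕ) : Set (ℕ × ℕ) :=
  {p | (p.1 + p.2 = s ∧ 2 ≤ p.2 ∧ p.2 ≤ m ∧ p.1 + 1 ≤ n) ∨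
       (n + 2 ≤ s ∧ p.1 = n ∧ p.2 + 2 + n = s) ∨
       (s ≤ n ∧ p.1 = s ∧ p.2 = 1) ∨
       (s + 1 ≤ n ∧ p.1 = s + 1 ∧ p.2 = 0)}

def T1f (m : ℕ) : Set (ℕ × ℕ) := {p | p = (1, 0) ∨ p = (0, m)}

def T2f (m : ℕ) : Set (ℕ × ℕ) := {p | p = (0, m - 1)}

/-- Generic tool: to compute `phiG` it suffices to identify the下 region. -/
lemma phi_eq {T T' : Set (ℕ × ℕ)}
    (hgrid : ∀ p ∈ T', p.1 ≤ n ∧ p.2 ≤ m)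
    (hanti : ∀ p ∈ T', ∀ q ∈ T', p.1 ≤ q.1 → p.2 ≤ q.2 → p = q)
    (hEQ : ∀ α β, α ≤ n → β ≤ m → (PP T α β ↔ ∃ p ∈ T', α ≤ p.1 ∧ β ≤ p.2)) :
    phiG n m T = T' := by
  ext ⟨α, β⟩
  simp only [phiG, Set.mem_setOf_eq]
  constructor
  · rintro ⟨h1, h2, hP, hl1, hl2⟩
    obtain ⟨p, hp, ha, hb⟩ := (hEQ α β h1 h2).1 hP
    have hpn := (hgrid p hp).1
    have hpm := (hgrid p hp).2
    have hA : α = p.1 := by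
      by_contra hne
      have hlt : α + 1 ≤ p.1 := by omega
      have hP1 : PP T (α + 1) β := (hEQ (α + 1) β (by omega) h2).2 ⟨p, hp, hlt, hb⟩
      rcases hl1 with h' | h'
      · omega
      · exact h' hP1
    have hB : β = p.2 := by
      by_contra hne
      have hlt : β + 1 ≤ p.2 := by omega
      have hP1 : PP T α (β + 1) := (hEQ α (β + 1) h1 (by omega)).2 ⟨p, hp, ha, hlt⟩
      rcases hl2 with h' | h'
      · omega
      · exact h' hP1
    have : (α, β) = p := by rw [hA, hB]
    rwa [this]
  · intro hp
    have h1 := (hgrid _ hp).1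
    have h2 := (hgrid _ hp).2
    refine ⟨h1, h2, (hEQ α β h1 h2).2 ⟨(α, β), hp, le_refl _, le_refl _⟩, ?_, ?_⟩
    · by_cases hn : α = n
      · exact Or.inl hn
      · refine Or.inr (fun hP1 => ?_)
        obtain ⟨⟨q1, q2⟩, hq, hα, hβ⟩ := (hEQ (α + 1) β (by omega) h2).1 hP1
        have := hanti (α, β) hp (q1, q2) hq (by simp only at hα ⊢; omega) hβ
        simp only [Prod.mk.injEq] at this
        simp only at hα
        omega
    · by_cases hm' : β = m
      · exact Or.inl hm'
      · refine Or.inr (fun hP1 => ?_)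
        obtain ⟨⟨q1, q2⟩, hq, hα, hβ⟩ := (hEQ α (β + 1) h1 (by omega)).1 hP1
        have := hanti (α, β) hp (q1, q2) hq hα (by simp only at hβ ⊢; omega)
        simp only [Prod.mk.injEq] at this
        simp only at hβ
        omega

lemma Gf_grid (hm : 1 ≤ m) (s : ℕ) (hs : s ≤ n + m) : ∀ p ∈ Gf n m s, p.1 ≤ n ∧ p.2 ≤ m := by
  rintro ⟨a, b⟩ hp
  simp only [Gf, Set.mem_setOf_eq] at hp
  omega

lemma Gf_anti (s : ℕ) : ∀ p ∈ Gf n m s, ∀ q ∈ Gf n m s,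
    p.1 ≤ q.1 → p.2 ≤ q.2 → p = q := by
  rintro ⟨a, b⟩ hp ⟨c, d⟩ hq h1 h2
  simp only [Gf, Set.mem_setOf_eq] at hp hq
  simp only [Prod.mk.injEq]
  omega

/-- The main transition: `phiG` maps `Gf s` to `Gf (s-1)` for `2 ≤ s ≤ n+m`. -/
lemma step3 (hm : 1 ≤ m) (s : ℕ) (h2 : 2 ≤ s) (hs : s ≤ n + m) :
    phiG n m (Gf n m s) = Gf n m (s - 1) := by
  apply phi_eq (Gf_grid hm (s - 1) (by omega)) (Gf_anti (s - 1))
  intro α β hα hβ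
  constructor
  · intro hP
    have hX : ¬(2 ≤ min (min m β) s ∧ s ≤ α + min (min m β) s ∧
        s + 1 ≤ n + min (min m β) s) := by
      rintro ⟨c1, c2, c3⟩
      have := hP (s - min (min m β) s, min (min m β) s)
        (Or.inl (by constructor <;> omega))
      simp only at this
      omega
    have hY : n + 2 ≤ s → (α < n ∨ β + 2 + n < s) := by
      intro h
      have := hP (n, s - 2 - n) (Or.inr (Or.inl ⟨h, rfl, by omega⟩))
      simp only at this
      omega
    have hZ1 : s ≤ n → (α < s ∨ β < 1) := by
      intro h
      have := hP (s, 1) (Or.inr (Or.inr (Or.inl ⟨h, rfl, rfl⟩)))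
      simpa using this
    have hZ2 : s + 1 ≤ n → α < s + 1 := by
      intro h
      have := hP (s + 1, 0) (Or.inr (Or.inr (Or.inr ⟨h, rfl, rfl⟩)))
      simp only at this
      omega
    by_cases hc1 : β ≤ min m (s - 1 - α) ∧ 2 ≤ min m (s - 1 - α) ∧
        s ≤ n + min m (s - 1 - α) ∧ α + min m (s - 1 - α) + 1 ≤ s
    · exact ⟨(s - 1 - min m (s - 1 - α), min m (s - 1 - α)),
        Or.inl (by constructor <;> omega), by omega, by omega⟩
    by_cases hc2 : n + 3 ≤ s ∧ β + 3 + n ≤ s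
    · exact ⟨(n, s - 1 - 2 - n), Or.inr (Or.inl ⟨by omega, rfl, by omega⟩),
        by omega, by omega⟩
    by_cases hc3 : s - 1 ≤ n ∧ α ≤ s - 1 ∧ β ≤ 1
    · exact ⟨(s - 1, 1), Or.inr (Or.inr (Or.inl ⟨by omega, rfl, rfl⟩)),
        by omega, by omega⟩
    by_cases hc4 : s ≤ n ∧ α ≤ s ∧ β = 0
    · exact ⟨(s, 0), Or.inr (Or.inr (Or.inr ⟨by omega, by omega, rfl⟩)),
        by omega, by omega⟩
    · exfalso
      omega
  · rintro ⟨⟨a', b'⟩, hp', ha, hb⟩ ⟨a, b⟩ hp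
    simp only at ha hb
    simp only [Gf, Set.mem_setOf_eq] at hp' hp
    simp only
    omega

lemma Gf1_eq (hn : 2 ≤ n) : Gf n m 1 = {p | p = (1, 1) ∨ p = (2, 0)} := by
  ext ⟨a, b⟩
  simp only [Gf, Set.mem_setOf_eq, Prod.mk.injEq]
  constructor <;> intro h <;> omega

lemma step0 (hn : 2 ≤ n) (hm : 1 ≤ m) : phiG n m (Gf n m 1) = T1f m := by
  rw [Gf1_eq hn]
  apply phi_eq
  · rintro ⟨a, b⟩ hp
    simp only [T1f, Set.mem_setOf_eq, Prod.mk.injEq] at hp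
    omega
  · rintro ⟨a, b⟩ hp ⟨c, d⟩ hq h1 h2
    simp only [T1f, Set.mem_setOf_eq, Prod.mk.injEq] at hp hq
    simp only [Prod.mk.injEq]
    omega
  · intro α β hα hβ
    constructor
    · intro hP
      have h1 := hP (1, 1) (Or.inl rfl)
      have h2 := hP (2, 0) (Or.inr rfl)
      simp only at h1 h2
      by_cases hb : β = 0
      · exact ⟨(1, 0), Or.inl rfl, by omega, by omega⟩
      · exact ⟨(0, m), Or.inr rfl, by omega, by omega⟩
    · rintro ⟨⟨a', b'⟩, hp', ha, hb⟩ ⟨a, b⟩ hp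
      simp only [T1f, Set.mem_setOf_eq, Prod.mk.injEq] at hp'
      simp only [Set.mem_setOf_eq, Prod.mk.injEq] at hp
      simp only at ha hb ⊢
      omega

lemma step1 (hn : 2 ≤ n) (hm : 1 ≤ m) : phiG n m (T1f m) = T2f m := by
  apply phi_eq
  · rintro ⟨a, b⟩ hp
    simp only [T2f, Set.mem_setOf_eq, Prod.mk.injEq] at hp
    omega
  · rintro ⟨a, b⟩ hp ⟨c, d⟩ hq h1 h2
    simp only [T2f, Set.mem_setOf_eq, Prod.mk.injEq] at hp hq
    simp only [Prod.mk.injEq]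
    omega
  · intro α β hα hβ
    constructor
    · intro hP
      have h1 := hP (1, 0) (Or.inl rfl)
      have h2 := hP (0, m) (Or.inr rfl)
      simp only at h1 h2
      exact ⟨(0, m - 1), rfl, by omega, by omega⟩
    · rintro ⟨⟨a', b'⟩, hp', ha, hb⟩ ⟨a, b⟩ hp
      simp only [T2f, Set.mem_setOf_eq, Prod.mk.injEq] at hp'
      simp only [T1f, Set.mem_setOf_eq, Prod.mk.injEq] at hp
      simp only at ha hb ⊢
      omega

lemma step2 (hn : 2 ≤ n) (hm : 1 ≤ m) : phiG n m (T2f m) = Gf n m (n + m) := by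
  apply phi_eq (Gf_grid hm (n + m) (le_refl _)) (Gf_anti (n + m))
  intro α β hα hβ
  constructor
  · intro hP
    have h1 := hP (0, m - 1) rfl
    simp only at h1
    refine ⟨(n, m - 2), Or.inr (Or.inl ⟨by omega, rfl, by omega⟩), by omega, by omega⟩
  · rintro ⟨⟨a', b'⟩, hp', ha, hb⟩ ⟨a, b⟩ hp
    simp only [Gf, Set.mem_setOf_eq] at hp'
    simp only [T2f, Set.mem_setOf_eq, Prod.mk.injEq] at hp
    simp only at ha hb ⊢
    omega


lemma cA_pairAA {i j : Fin n} (hij : i ≠ j) :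
    cA ({Sum.inl i, Sum.inl j} : Set (Fin n ⊕ Fin m)) = 2 ∧
    cB ({Sum.inl i, Sum.inl j} : Set (Fin n ⊕ Fin m)) = 0 := by
  constructor
  · have h1 : ({Sum.inl i, Sum.inl j} : Set (Fin n ⊕ Fin m)) ∩ range Sum.inl
        = {Sum.inl i, Sum.inl j} :=
      inter_eq_left.2 (by rintro v (rfl | rfl) <;> exact ⟨_, rfl⟩)
    rw [cA, h1, Set.ncard_pair (Sum.inl_injective.ne hij)]
  · have h2 : ({Sum.inl i, Sum.inl j} : Set (Fin n ⊕ Fin m)) ∩ range Sum.inr = ∅ := by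
      ext v
      simp only [mem_inter_iff, mem_insert_iff, mem_singleton_iff, mem_range,
        mem_empty_iff_false, iff_false, not_and]
      rintro (rfl | rfl) ⟨k, hk⟩ <;> simp at hk
    rw [cB, h2, ncard_empty]

lemma cA_pairAB (i : Fin n) (j : Fin m) :
    cA ({Sum.inl i, Sum.inr j} : Set (Fin n ⊕ Fin m)) = 1 ∧
    cB ({Sum.inl i, Sum.inr j} : Set (Fin n ⊕ Fin m)) = 1 := by
  constructor
  · have h1 : ({Sum.inl i, Sum.inr j} : Set (Fin n ⊕ Fin m)) ∩ range Sum.inl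
        = {Sum.inl i} := by
      ext v
      constructor
      · rintro ⟨rfl | rfl, k, hk⟩
        · rfl
        · simp at hk
      · rintro rfl
        exact ⟨Or.inl rfl, i, rfl⟩
    rw [cA, h1, ncard_singleton]
  · have h2 : ({Sum.inl i, Sum.inr j} : Set (Fin n ⊕ Fin m)) ∩ range Sum.inr
        = {Sum.inr j} := by
      ext v
      constructor
      · rintro ⟨rfl | rfl, k, hk⟩
        · simp at hk
        · rfl
      · rintro rfl
        exact ⟨Or.inr rfl, j, rfl⟩
    rw [cB, h2, ncard_singleton]

lemma split_eq (hn : 2 ≤ n) : splitGraph n m = LL n m (Gf n m 1) := by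
  rw [Gf1_eq hn]
  ext e
  simp only [splitGraph, LL, Set.mem_setOf_eq, Prod.mk.injEq]
  constructor
  · rintro (⟨i, j, hij, rfl⟩ | ⟨i, j, rfl⟩)
    · exact Or.inr ⟨(cA_pairAA hij).1, (cA_pairAA hij).2⟩
    · exact Or.inl ⟨(cA_pairAB i j).1, (cA_pairAB i j).2⟩
  · rintro (⟨h1, h2⟩ | ⟨h1, h2⟩)
    · -- counts (1,1)
      obtain ⟨u, hu⟩ := Set.ncard_eq_one.1 h1
      obtain ⟨w, hw⟩ := Set.ncard_eq_one.1 h2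
      have huA : u ∈ e ∩ range Sum.inl := by rw [hu]; rfl
      have hwB : w ∈ e ∩ range Sum.inr := by rw [hw]; rfl
      obtain ⟨i, hi⟩ := huA.2
      obtain ⟨j, hj⟩ := hwB.2
      refine Or.inr ⟨i, j, ?_⟩
      rw [← partitionAB e, hu, hw, Set.singleton_union, hi, hj]
    · -- counts (2,0)
      obtain ⟨u, v, huv, hpair⟩ := Set.ncard_eq_two.1 h1
      have hB : e ∩ range Sum.inr = ∅ := Set.ncard_eq_zero (toFinite _) |>.1 h2
      have huA : u ∈ e ∩ range Sum.inl := by rw [hpair]; exact Or.inl rfl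
      have hvA : v ∈ e ∩ range Sum.inl := by rw [hpair]; exact Or.inr rfl
      obtain ⟨i, hi⟩ := huA.2
      obtain ⟨j, hj⟩ := hvA.2
      refine Or.inl ⟨i, j, ?_, ?_⟩
      · intro hc
        exact huv (by rw [← hi, ← hj, hc])
      · rw [← partitionAB e, hpair, hB, Set.union_empty, hi, hj]

lemma split_ncard : ∀ g ∈ splitGraph n m, g.ncard = 2 := by
  rintro g (⟨i, j, hij, rfl⟩ | ⟨i, j, rfl⟩)
  · exact Set.ncard_pair (Sum.inl_injective.ne hij)
  · exact Set.ncard_pair (by simp)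

lemma split_covers (hn : 2 ≤ n) :
    ∀ w : Fin n ⊕ Fin m, ∃ g ∈ splitGraph n m, w ∈ g := by
  intro w
  cases w with
  | inl i =>
    obtain ⟨j, hj⟩ := Fintype.exists_ne_of_one_lt_card
      (by rw [Fintype.card_fin]; omega) i
    exact ⟨{Sum.inl i, Sum.inl j}, Or.inl ⟨i, j, Ne.symm hj, rfl⟩, Or.inl rfl⟩
  | inr j =>
    exact ⟨{Sum.inl ⟨0, by omega⟩, Sum.inr j},
      Or.inr ⟨⟨0, by omega⟩, j, rfl⟩, Or.inr rfl⟩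

lemma INV1 (hn : 2 ≤ n)
    {T : Set (ℕ × ℕ)} (hex : ∃ p ∈ T, p.1 ≤ n ∧ p.2 ≤ m ∧ p.1 + p.2 ≠ 2) :
    ¬ IsIsoC (LL n m T) (splitGraph n m) := by
  rintro ⟨π, hπ⟩
  obtain ⟨⟨a, b⟩, hp, h1, h2, h3⟩ := hex
  obtain ⟨S, hSa, hSb⟩ := exists_counts h1 h2
  have hS : S ∈ LL n m T := by
    show (cA S, cB S) ∈ T
    rw [hSa, hSb]
    exact hp
  have himg := (hπ S).1 hS
  have hc2 := split_ncard _ himg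
  rw [Set.ncard_image_of_injective _ π.injective] at hc2
  have hsum := cA_add_cB S
  simp only at h3
  omega

lemma INV2 (hn : 2 ≤ n) (hm : 1 ≤ m)
    {T : Set (ℕ × ℕ)} (hall : (∀ p ∈ T, p.2 = 0) ∨ (∀ p ∈ T, p.1 = 0)) :
    ¬ IsIsoC (LL n m T) (splitGraph n m) := by
  rintro ⟨π, hπ⟩
  rcases hall with hall | hall
  · obtain ⟨g, hg, hvg⟩ := split_covers hn (π (Sum.inr ⟨0, hm⟩))
    have hgF : π ⁻¹' g ∈ LL n m T :=
      (hπ _).2 (by rwa [Set.image_preimage_eq _ π.surjective])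
    have hb : cB (π ⁻¹' g) = 0 := hall _ hgF
    have hemp : (π ⁻¹' g ∩ range Sum.inr) = ∅ :=
      (Set.ncard_eq_zero (toFinite _)).1 hb
    have hvmem : Sum.inr ⟨0, hm⟩ ∈ π ⁻¹' g ∩ range Sum.inr := ⟨hvg, ⟨_, rfl⟩⟩
    rw [hemp] at hvmem
    exact hvmem
  · obtain ⟨g, hg, hvg⟩ := split_covers hn (π (Sum.inl ⟨0, by omega⟩))
    have hgF : π ⁻¹' g ∈ LL n m T :=
      (hπ _).2 (by rwa [Set.image_preimage_eq _ π.surjective])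
    have hb : cA (π ⁻¹' g) = 0 := hall _ hgF
    have hemp : (π ⁻¹' g ∩ range Sum.inl) = ∅ :=
      (Set.ncard_eq_zero (toFinite _)).1 hb
    have hvmem : Sum.inl ⟨0, by omega⟩ ∈ π ⁻¹' g ∩ range Sum.inl := ⟨hvg, ⟨_, rfl⟩⟩
    rw [hemp] at hvmem
    exact hvmem

lemma iter1 (hn : 2 ≤ n) (hm : 1 ≤ m) :
    nf^[1] (splitGraph n m) = LL n m (T1f m) := by
  rw [Function.iterate_one, split_eq hn, nf_LL, step0 hn hm]

lemma iter2 (hn : 2 ≤ n) (hm : 1 ≤ m) :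
    nf^[2] (splitGraph n m) = LL n m (T2f m) := by
  rw [show (2 : ℕ) = 1 + 1 from rfl, Function.iterate_succ_apply',
    iter1 hn hm, nf_LL, step1 hn hm]

lemma iter3 (hn : 2 ≤ n) (hm : 1 ≤ m) :
    nf^[3] (splitGraph n m) = LL n m (Gf n m (n + m)) := by
  rw [show (3 : ℕ) = 2 + 1 from rfl, Function.iterate_succ_apply',
    iter2 hn hm, nf_LL, step2 hn hm]

lemma iterEq (hn : 2 ≤ n) (hm : 1 ≤ m) :
    ∀ q, 3 ≤ q → q ≤ n + m + 2 →
      nf^[q] (splitGraph n m) = LL n m (Gf n m (n + m + 3 - q)) := by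
  intro q hq3
  induction q, hq3 using Nat.le_induction with
  | base =>
    intro _
    have h : n + m + 3 - 3 = n + m := by omega
    rw [h, iter3 hn hm]
  | succ q hq IH =>
    intro hle
    rw [Function.iterate_succ_apply', IH (by omega), nf_LL,
      step3 hm (n + m + 3 - q) (by omega) (by omega)]
    have h : n + m + 3 - q - 1 = n + m + 3 - (q + 1) := by omega
    rw [h]

end NFAux

open NFAux in
/-- For `n ≥ 2`, `m ≥ 1`, the NF-number of the complete split graph `S_{n,m}`
(the least `q > 0` with `δ_NF^(q)(Δ(S_{n,m})) ≅ Δ(S_{n,m})`) equals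
`n + m + 2`. -/
theorem splitGraph_NF_number (n m : ℕ) (hn : 2 ≤ n) (hm : 1 ≤ m) :
    IsLeast {q : ℕ | 0 < q ∧ IsIsoC (nf^[q] (splitGraph n m)) (splitGraph n m)}
      (n + m + 2) := by
  constructor
  · refine ⟨by omega, ?_⟩
    have h := iterEq hn hm (n + m + 2) (by omega) (le_refl _)
    have h1 : n + m + 3 - (n + m + 2) = 1 := by omega
    rw [h1] at h
    rw [h, ← split_eq hn]
    exact ⟨Equiv.refl _, fun S => by simp⟩
  · rintro q ⟨hq0, hqiso⟩
    by_contra hlt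
    push_neg at hlt
    by_cases hq1 : q = 1
    · subst hq1
      rw [iter1 hn hm] at hqiso
      exact INV1 hn ⟨(1, 0), Or.inl rfl, by omega, by omega, by omega⟩ hqiso
    by_cases hq2 : q = 2
    · subst hq2
      rw [iter2 hn hm] at hqiso
      refine INV2 hn hm (Or.inr ?_) hqiso
      rintro ⟨a, b⟩ hp
      simp only [T2f, Set.mem_setOf_eq, Prod.mk.injEq] at hp
      simp only
      omega
    -- now 3 ≤ q ≤ n + m + 1
    have hq3 : 3 ≤ q := by omega
    rw [iterEq hn hm q hq3 (by omega)] at hqiso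
    set s : ℕ := n + m + 3 - q with hsdef
    have hs2 : 2 ≤ s := by omega
    have hsnm : s ≤ n + m := by omega
    by_cases hs1 : s ≤ n
    · exact INV1 hn ⟨(s, 1), Or.inr (Or.inr (Or.inl ⟨hs1, rfl, rfl⟩)),
        by omega, by omega, by omega⟩ hqiso
    by_cases hm1 : m = 1
    · refine INV2 hn hm (Or.inl ?_) hqiso
      rintro ⟨a, b⟩ hp
      simp only [Gf, Set.mem_setOf_eq] at hp
      simp only
      omega
    by_cases hsn1 : s = n + 1
    · exact INV1 hn ⟨(s - min m s, min m s),
        Or.inl ⟨by omega, by omega, by omega, by omega⟩,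
        by omega, by omega, by omega⟩ hqiso
    by_cases hs4 : s = 4
    · -- here n = 2
      by_cases hm3 : 3 ≤ m
      · exact INV1 hn ⟨(1, 3), Or.inl ⟨by omega, by omega, hm3, by omega⟩,
          by omega, by omega, by omega⟩ hqiso
      · refine INV2 hn hm (Or.inl ?_) hqiso
        rintro ⟨a, b⟩ hp
        simp only [Gf, Set.mem_setOf_eq] at hp
        simp only
        omega
    · exact INV1 hn ⟨(n, s - 2 - n), Or.inr (Or.inl ⟨by omega, rfl, by omega⟩),
        by omega, by omega, by omega⟩ hqiso
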